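/- arXiv:1603.09232 — 2 statements merged into one kernel-verified Lean document; each statement's English description precedes it below -/
import Mathlib

section
/- The function h(x) := x/P'(x)^{k−1} − Q(x) has exactly one zero in the open interval (0,1). Equivalently, the equation α = Q(α)·P'(α)^{k−1} has a unique root α_end with 0 < α_end < 1. -/
open Finset

/-- The generating polynomial `P(x) = ∑_{i=1}^Δ ζ_i x^i` of the degree sequence. -/
noncomputable def Ppoly (Δ : ℕ) (ζ : ℕ → ℝ) (x : ℝ) : ℝ :=
  ∑ i ∈ Finset.Icc 1 Δ, ζ i * x ^ i

/-- The derivative `P'(x) = ∑_{i=1}^Δ i ζ_i x^{i-1}`. -/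
noncomputable def Pderiv (Δ : ℕ) (ζ : ℕ → ℝ) (x : ℝ) : ℝ :=
  ∑ i ∈ Finset.Icc 1 Δ, ζ i * i * x ^ (i - 1)

/-- The second derivative `P''(x) = ∑_{i=1}^Δ i(i-1) ζ_i x^{i-2}`. -/
noncomputable def Pderiv2 (Δ : ℕ) (ζ : ℕ → ℝ) (x : ℝ) : ℝ :=
  ∑ i ∈ Finset.Icc 1 Δ, ζ i * i * (i - 1) * x ^ (i - 2)

/-- `Q(x) = ∫_x^1 (k-1) w P''(w) / P'(w)^k dw`. -/
noncomputable def Qfun (k Δ : ℕ) (ζ : ℕ → ℝ) (x : ℝ) : ℝ :=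
  ∫ w in x..1, ((k : ℝ) - 1) * w * Pderiv2 Δ ζ w / (Pderiv Δ ζ w) ^ k

/-- `h(x) = x / P'(x)^{k-1} - Q(x)`. -/
noncomputable def hfun (k Δ : ℕ) (ζ : ℕ → ℝ) (x : ℝ) : ℝ :=
  x / (Pderiv Δ ζ x) ^ (k - 1) - Qfun k Δ ζ x

section lems
variable {k Δ : ℕ} {ζ : ℕ → ℝ}

lemma Pderiv_pos (hΔ : 2 ≤ Δ) (hζ : ∀ i ∈ Finset.Icc 1 Δ, 0 ≤ ζ i) (hζΔ : 0 < ζ Δ)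
    {x : ℝ} (hx : 0 < x) : 0 < Pderiv Δ ζ x := by
  apply Finset.sum_pos'
  · intro i hi
    have h0 := hζ i hi
    positivity
  · refine ⟨Δ, Finset.mem_Icc.mpr ⟨by omega, le_rfl⟩, ?_⟩
    have h1 : (0:ℝ) < (Δ:ℝ) := by exact_mod_cast (by omega : 0 < Δ)
    positivity

lemma Pderiv_le (hζ : ∀ i ∈ Finset.Icc 1 Δ, 0 ≤ ζ i)
    {x y : ℝ} (h0 : 0 ≤ x) (h1 : x ≤ y) : Pderiv Δ ζ x ≤ Pderiv Δ ζ y := by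
  apply Finset.sum_le_sum
  intro i hi
  have h0i := hζ i hi
  have : x ^ (i-1) ≤ y ^ (i-1) := pow_le_pow_left₀ h0 h1 _
  exact mul_le_mul_of_nonneg_left this (by positivity)

lemma Pderiv_lt (hΔ : 2 ≤ Δ) (hζ : ∀ i ∈ Finset.Icc 1 Δ, 0 ≤ ζ i) (hζΔ : 0 < ζ Δ) :
    Pderiv Δ ζ (3/4) < Pderiv Δ ζ 1 := by
  apply Finset.sum_lt_sum
  · intro i hi
    have h0i := hζ i hi
    have : (3/4:ℝ) ^ (i-1) ≤ 1 ^ (i-1) := pow_le_pow_left₀ (by norm_num) (by norm_num) _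
    exact mul_le_mul_of_nonneg_left this (by positivity)
  · refine ⟨Δ, Finset.mem_Icc.mpr ⟨by omega, le_rfl⟩, ?_⟩
    have h1 : (0:ℝ) < (Δ:ℝ) := by exact_mod_cast (by omega : 0 < Δ)
    have : (3/4:ℝ) ^ (Δ-1) < 1 := pow_lt_one₀ (by norm_num) (by norm_num) (by omega)
    calc ζ Δ * Δ * (3/4:ℝ)^(Δ-1) < ζ Δ * Δ * 1 := by
          apply mul_lt_mul_of_pos_left this (by positivity)
      _ = ζ Δ * Δ * 1 ^ (Δ-1) := by norm_num

lemma Pderiv_cont : Continuous (Pderiv Δ ζ) := by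
  unfold Pderiv; fun_prop

lemma Pderiv2_cont : Continuous (Pderiv2 Δ ζ) := by
  unfold Pderiv2; fun_prop

lemma Pderiv_hasDerivAt (x : ℝ) : HasDerivAt (Pderiv Δ ζ) (Pderiv2 Δ ζ x) x := by
  unfold Pderiv Pderiv2
  apply HasDerivAt.fun_sum
  intro i hi
  have h1 : 1 ≤ i := (Finset.mem_Icc.mp hi).1
  have h := (hasDerivAt_pow (i-1) x).const_mul (ζ i * i)
  refine h.congr_deriv ?_
  have h2 : ((i-1 : ℕ) : ℝ) = (i:ℝ) - 1 := by push_cast [h1]; ring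
  rw [h2]
  have : i - 1 - 1 = i - 2 := by omega
  rw [this]; ring

/-- The integrand of `Q`. -/
noncomputable def Qint (k Δ : ℕ) (ζ : ℕ → ℝ) (w : ℝ) : ℝ :=
  ((k : ℝ) - 1) * w * Pderiv2 Δ ζ w / (Pderiv Δ ζ w) ^ k

lemma Qint_contAt (hΔ : 2 ≤ Δ) (hζ : ∀ i ∈ Finset.Icc 1 Δ, 0 ≤ ζ i) (hζΔ : 0 < ζ Δ)
    {x : ℝ} (hx : 0 < x) : ContinuousAt (Qint k Δ ζ) x := by
  apply ContinuousAt.div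
  · exact (continuous_const.mul continuous_id').continuousAt.mul Pderiv2_cont.continuousAt
  · exact (Pderiv_cont.pow k).continuousAt
  · exact pow_ne_zero _ (Pderiv_pos hΔ hζ hζΔ hx).ne'

lemma Qint_contOn (hΔ : 2 ≤ Δ) (hζ : ∀ i ∈ Finset.Icc 1 Δ, 0 ≤ ζ i) (hζΔ : 0 < ζ Δ) :
    ContinuousOn (Qint k Δ ζ) (Set.Ioi 0) :=
  fun x hx => (Qint_contAt hΔ hζ hζΔ hx).continuousWithinAt

lemma uIcc_subset_Ioi {a b : ℝ} (ha : 0 < a) (hb : 0 < b) :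
    Set.uIcc a b ⊆ Set.Ioi 0 := fun x hx => lt_of_lt_of_le (lt_min ha hb) hx.1

lemma Qint_integrable (hΔ : 2 ≤ Δ) (hζ : ∀ i ∈ Finset.Icc 1 Δ, 0 ≤ ζ i) (hζΔ : 0 < ζ Δ)
    {a b : ℝ} (ha : 0 < a) (hb : 0 < b) :
    IntervalIntegrable (Qint k Δ ζ) MeasureTheory.volume a b :=
  ((Qint_contOn hΔ hζ hζΔ).mono (uIcc_subset_Ioi ha hb)).intervalIntegrable

lemma Qfun_hasDerivAt (hΔ : 2 ≤ Δ) (hζ : ∀ i ∈ Finset.Icc 1 Δ, 0 ≤ ζ i) (hζΔ : 0 < ζ Δ)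
    {x : ℝ} (hx : 0 < x) : HasDerivAt (Qfun k Δ ζ) (-(Qint k Δ ζ x)) x := by
  have := intervalIntegral.integral_hasDerivAt_left (f := Qint k Δ ζ)
    (Qint_integrable (k := k) hΔ hζ hζΔ hx one_pos)
    (ContinuousOn.stronglyMeasurableAtFilter isOpen_Ioi (Qint_contOn (k := k) hΔ hζ hζΔ) x hx)
    (Qint_contAt (k := k) hΔ hζ hζΔ hx)
  exact this

lemma hfun_hasDerivAt (hk : 2 ≤ k) (hΔ : 2 ≤ Δ) (hζ : ∀ i ∈ Finset.Icc 1 Δ, 0 ≤ ζ i)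
    (hζΔ : 0 < ζ Δ) {x : ℝ} (hx : 0 < x) :
    HasDerivAt (hfun k Δ ζ) ((Pderiv Δ ζ x ^ (k-1))⁻¹) x := by
  obtain ⟨m, rfl⟩ : ∃ m, k = m + 2 := ⟨k - 2, by omega⟩
  have hP := Pderiv_pos hΔ hζ hζΔ hx
  have hPne : Pderiv Δ ζ x ≠ 0 := hP.ne'
  have hd1 : HasDerivAt (fun y => y / Pderiv Δ ζ y ^ (m+2-1))
      ((1 * Pderiv Δ ζ x ^ (m+1) - x * (((m+1:ℕ):ℝ) * Pderiv Δ ζ x ^ (m+1-1) * Pderiv2 Δ ζ x))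
        / (Pderiv Δ ζ x ^ (m+1)) ^ 2) x := by
    simpa using (hasDerivAt_id x).fun_div ((Pderiv_hasDerivAt x).pow (m+1)) (pow_ne_zero _ hPne)
  have hd2 := Qfun_hasDerivAt (k := m+2) hΔ hζ hζΔ hx
  have := hd1.sub hd2
  refine this.congr_deriv ?_
  unfold Qint
  have h1 : m + 1 - 1 = m := by omega
  rw [h1]
  push_cast
  field_simp
  ring

lemma hfun_strictMono (hk : 2 ≤ k) (hΔ : 2 ≤ Δ) (hζ : ∀ i ∈ Finset.Icc 1 Δ, 0 ≤ ζ i)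
    (hζΔ : 0 < ζ Δ) : StrictMonoOn (hfun k Δ ζ) (Set.Ioi 0) := by
  apply strictMonoOn_of_deriv_pos (convex_Ioi 0)
  · exact fun x hx => (hfun_hasDerivAt hk hΔ hζ hζΔ hx).continuousAt.continuousWithinAt
  · intro x hx
    rw [interior_Ioi] at hx
    rw [(hfun_hasDerivAt hk hΔ hζ hζΔ hx).deriv]
    exact inv_pos.mpr (pow_pos (Pderiv_pos hΔ hζ hζΔ hx) _)

lemma hfun_one (hΔ : 2 ≤ Δ) : hfun k Δ ζ 1 = (Pderiv Δ ζ 1 ^ (k-1))⁻¹ := by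
  unfold hfun Qfun
  rw [intervalIntegral.integral_same, one_div]
  ring

end lems

section main
variable {k Δ : ℕ} {ζ : ℕ → ℝ}

/-- The derivative of `h`. -/
noncomputable def gfun (k Δ : ℕ) (ζ : ℕ → ℝ) (w : ℝ) : ℝ := (Pderiv Δ ζ w ^ (k-1))⁻¹

lemma gfun_contOn (hΔ : 2 ≤ Δ) (hζ : ∀ i ∈ Finset.Icc 1 Δ, 0 ≤ ζ i) (hζΔ : 0 < ζ Δ) :
    ContinuousOn (gfun k Δ ζ) (Set.Ioi 0) := by
  intro x hx
  exact (((Pderiv_cont.pow (k-1)).continuousAt).inv₀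
    (pow_ne_zero _ (Pderiv_pos hΔ hζ hζΔ hx).ne')).continuousWithinAt

lemma gfun_integrable (hΔ : 2 ≤ Δ) (hζ : ∀ i ∈ Finset.Icc 1 Δ, 0 ≤ ζ i) (hζΔ : 0 < ζ Δ)
    {a b : ℝ} (ha : 0 < a) (hb : 0 < b) :
    IntervalIntegrable (gfun k Δ ζ) MeasureTheory.volume a b :=
  ((gfun_contOn hΔ hζ hζΔ).mono (uIcc_subset_Ioi ha hb)).intervalIntegrable

lemma hfun_eval (hk : 2 ≤ k) (hΔ : 2 ≤ Δ) (hζ : ∀ i ∈ Finset.Icc 1 Δ, 0 ≤ ζ i)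
    (hζΔ : 0 < ζ Δ) {a : ℝ} (ha : 0 < a) (ha1 : a ≤ 1) :
    hfun k Δ ζ a = (Pderiv Δ ζ 1 ^ (k-1))⁻¹ - ∫ w in a..1, gfun k Δ ζ w := by
  have heq : ∫ w in a..1, gfun k Δ ζ w = hfun k Δ ζ 1 - hfun k Δ ζ a := by
    apply intervalIntegral.integral_eq_sub_of_hasDerivAt
    · intro w hw
      have hw0 : 0 < w := lt_of_lt_of_le (by simpa [min_eq_left ha1] using ha) hw.1
      exact hfun_hasDerivAt hk hΔ hζ hζΔ hw0
    · exact gfun_integrable hΔ hζ hζΔ ha one_pos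
  rw [hfun_one hΔ] at heq
  linarith

end main

/-- `h` has exactly one zero in `(0,1)`; equivalently, the equation
`α = Q(α) P'(α)^{k-1}` has a unique root `α_end ∈ (0,1)`. -/
theorem hfun_unique_zero (k Δ : ℕ) (hk : 2 ≤ k) (hΔ : 2 ≤ Δ) (ζ : ℕ → ℝ)
    (hζ : ∀ i ∈ Finset.Icc 1 Δ, 0 ≤ ζ i) (hζΔ : 0 < ζ Δ)
    (hsum : ∑ i ∈ Finset.Icc 1 Δ, ζ i = 1) :
    (∃! x, x ∈ Set.Ioo (0 : ℝ) 1 ∧ hfun k Δ ζ x = 0) ∧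
    (∃! α, α ∈ Set.Ioo (0 : ℝ) 1 ∧ α = Qfun k Δ ζ α * (Pderiv Δ ζ α) ^ (k - 1)) := by
  have hS : 0 < Pderiv Δ ζ 1 := Pderiv_pos hΔ hζ hζΔ one_pos
  have hc : 0 < Pderiv Δ ζ (3/4:ℝ) := Pderiv_pos hΔ hζ hζΔ (by norm_num)
  set A := (Pderiv Δ ζ 1 ^ (k-1))⁻¹ with hAdef
  set B := (Pderiv Δ ζ (3/4:ℝ) ^ (k-1))⁻¹ with hBdef
  have hApos : 0 < A := inv_pos.mpr (pow_pos hS _)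
  have hBpos : 0 < B := inv_pos.mpr (pow_pos hc _)
  have hAB : A < B := by
    have hp : Pderiv Δ ζ (3/4:ℝ) ^ (k-1) < Pderiv Δ ζ 1 ^ (k-1) :=
      pow_lt_pow_left₀ (Pderiv_lt hΔ hζ hζΔ) hc.le (by omega)
    exact inv_strictAnti₀ (pow_pos hc _) hp
  set x₀ := min (1/2 : ℝ) ((B - A)/(8*A)) with hx₀def
  have hx₀pos : 0 < x₀ := lt_min (by norm_num) (div_pos (by linarith) (by positivity))
  have hx₀half : x₀ ≤ 1/2 := min_le_left _ _
  have hx₀B : x₀ * (8*A) ≤ B - A := by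
    have := min_le_right (1/2 : ℝ) ((B - A)/(8*A))
    calc x₀ * (8*A) ≤ (B - A)/(8*A) * (8*A) := by
          apply mul_le_mul_of_nonneg_right this (by positivity)
      _ = B - A := by field_simp
  -- pointwise lower bounds
  have hlbA : ∀ a b : ℝ, 0 < a → a ≤ b → b ≤ 1 → (b - a) * A ≤ ∫ w in a..b, gfun k Δ ζ w := by
    intro a b ha hab hb1
    have h := intervalIntegral.integral_mono_on (f := fun _ => A) (g := gfun k Δ ζ) hab
      intervalIntegrable_const (gfun_integrable hΔ hζ hζΔ ha (lt_of_lt_of_le ha hab))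
      (fun w hw => by
        have hw0 : 0 < w := lt_of_lt_of_le ha hw.1
        have hw1 : w ≤ 1 := hw.2.trans hb1
        have : Pderiv Δ ζ w ^ (k-1) ≤ Pderiv Δ ζ 1 ^ (k-1) :=
          pow_le_pow_left₀ (Pderiv_pos hΔ hζ hζΔ hw0).le (Pderiv_le hζ hw0.le hw1) _
        exact inv_anti₀ (pow_pos (Pderiv_pos hΔ hζ hζΔ hw0) _) this)
    simpa [smul_eq_mul, mul_comm] using h
  have hlbB : (1/4 : ℝ) * B ≤ ∫ w in (1/2 : ℝ)..(3/4 : ℝ), gfun k Δ ζ w := by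
    have h := intervalIntegral.integral_mono_on (f := fun _ => B) (g := gfun k Δ ζ)
      (by norm_num : (1/2:ℝ) ≤ 3/4)
      intervalIntegrable_const (gfun_integrable hΔ hζ hζΔ (by norm_num) (by norm_num))
      (fun w hw => by
        have hw0 : 0 < w := lt_of_lt_of_le (by norm_num) hw.1
        have : Pderiv Δ ζ w ^ (k-1) ≤ Pderiv Δ ζ (3/4:ℝ) ^ (k-1) :=
          pow_le_pow_left₀ (Pderiv_pos hΔ hζ hζΔ hw0).le (Pderiv_le hζ hw0.le hw.2) _
        exact inv_anti₀ (pow_pos (Pderiv_pos hΔ hζ hζΔ hw0) _) this)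
    rw [intervalIntegral.integral_const, smul_eq_mul] at h
    norm_num at h ⊢
    linarith
  have hsplit : ∫ w in x₀..1, gfun k Δ ζ w =
      (∫ w in x₀..(1/2:ℝ), gfun k Δ ζ w) + (∫ w in (1/2:ℝ)..(3/4:ℝ), gfun k Δ ζ w)
        + ∫ w in (3/4:ℝ)..1, gfun k Δ ζ w := by
    rw [intervalIntegral.integral_add_adjacent_intervals
          (gfun_integrable hΔ hζ hζΔ hx₀pos (by norm_num))
          (gfun_integrable hΔ hζ hζΔ (by norm_num) (by norm_num)),
        intervalIntegral.integral_add_adjacent_intervals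
          (gfun_integrable hΔ hζ hζΔ hx₀pos (by norm_num))
          (gfun_integrable hΔ hζ hζΔ (by norm_num) (by norm_num))]
  have hval : hfun k Δ ζ x₀ < 0 := by
    rw [hfun_eval hk hΔ hζ hζΔ hx₀pos (by linarith), hsplit, ← hAdef]
    have h1 := hlbA x₀ (1/2) hx₀pos hx₀half (by norm_num)
    have h3 := hlbA (3/4) 1 (by norm_num) (by norm_num) le_rfl
    nlinarith
  have hone : 0 < hfun k Δ ζ 1 := by
    rw [hfun_one hΔ]; exact hApos
  have hcont : ContinuousOn (hfun k Δ ζ) (Set.Icc x₀ 1) := fun w hw =>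
    (hfun_hasDerivAt hk hΔ hζ hζΔ (lt_of_lt_of_le hx₀pos hw.1)).continuousAt.continuousWithinAt
  have hivt := intermediate_value_Ioo (by linarith : x₀ ≤ 1) hcont
  obtain ⟨x, hx, hx0⟩ := hivt ⟨hval, hone⟩
  have hmem : x ∈ Set.Ioo (0:ℝ) 1 := ⟨lt_trans hx₀pos hx.1, hx.2⟩
  have hmonoS := hfun_strictMono hk hΔ hζ hζΔ
  have huniq : ∃! y, y ∈ Set.Ioo (0 : ℝ) 1 ∧ hfun k Δ ζ y = 0 := by
    refine ⟨x, ⟨hmem, hx0⟩, ?_⟩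
    rintro y ⟨hy, hy0⟩
    exact hmonoS.injOn (Set.mem_Ioi.mpr hy.1) (Set.mem_Ioi.mpr hmem.1) (by rw [hy0, hx0])
  have hiff : ∀ α ∈ Set.Ioo (0:ℝ) 1,
      (hfun k Δ ζ α = 0 ↔ α = Qfun k Δ ζ α * Pderiv Δ ζ α ^ (k-1)) := by
    intro α hα
    have hD : Pderiv Δ ζ α ^ (k-1) ≠ 0 := (pow_pos (Pderiv_pos hΔ hζ hζΔ hα.1) _).ne'
    unfold hfun
    rw [sub_eq_zero, div_eq_iff hD]
  refine ⟨huniq, ?_⟩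
  obtain ⟨z, ⟨hz, hz0⟩, hzu⟩ := huniq
  refine ⟨z, ⟨hz, (hiff z hz).mp hz0⟩, ?_⟩
  rintro y ⟨hy, hy0⟩
  exact hzu y ⟨hy, (hiff y hy).mpr hy0⟩
end

section
/- Let s, m : [0,T] → ℝ be continuous with m(t) > 0 on [0,T], define A(t) := exp(−∫_0^t (1+s(τ))/m(τ) dτ) and B(t) := ∫_0^t s(τ)A(τ)/m(τ) dτ. Suppose z_1, …, z_Δ : [0,T] → ℝ satisfy z_Δ(t) = ζ_Δ·A(t)^Δ and, for 1 ≤ i < Δ, the recursion z_i(t) = A(t)^i·(ζ_i + ∫_0^t A(τ)^{−i}·(i+1)·s(τ)·z_{i+1}(τ)/m(τ) dτ). Then for every i = 1, …, Δ and every t ∈ [0,T]: z_i(t) = A(t)^i · Σ_{ℓ=i}^Δ ζ_ℓ·C(ℓ,i)·B(t)^{ℓ−i}, where C(ℓ,i) is the binomial coefficient 'ℓ choose i'. -/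
/-- solving the recursion. With `A(t) = exp(−∫₀ᵗ (1+s)/m)` and
`B(t) = ∫₀ᵗ s·A/m`, if `z_Δ = ζ_Δ·A^Δ` and for `1 ≤ i < Δ`
`z_i(t) = A(t)^i (ζ_i + ∫₀ᵗ (i+1)·s·z_{i+1}/(m·A^i))`, then
`z_i(t) = A(t)^i ∑_{ℓ=i}^Δ ζ_ℓ C(ℓ,i) B(t)^{ℓ-i}` for all `1 ≤ i ≤ Δ`. -/
theorem recursion_solution (T : ℝ) (hT : 0 < T) (Δ : ℕ) (hΔ : 2 ≤ Δ) (ζ : ℕ → ℝ)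
    (s m : ℝ → ℝ) (hs : ContinuousOn s (Set.Icc 0 T)) (hm : ContinuousOn m (Set.Icc 0 T))
    (hmpos : ∀ t ∈ Set.Icc (0 : ℝ) T, 0 < m t)
    (A B : ℝ → ℝ)
    (hA : ∀ t, A t = Real.exp (-∫ τ in (0:ℝ)..t, (1 + s τ) / m τ))
    (hB : ∀ t, B t = ∫ τ in (0:ℝ)..t, s τ * A τ / m τ)
    (z : ℕ → ℝ → ℝ)
    (hzΔ : ∀ t ∈ Set.Icc (0 : ℝ) T, z Δ t = ζ Δ * A t ^ Δ)
    (hrec : ∀ i, 1 ≤ i → i < Δ → ∀ t ∈ Set.Icc (0 : ℝ) T,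
      z i t = A t ^ i *
        (ζ i + ∫ τ in (0:ℝ)..t, ((i : ℝ) + 1) * s τ * z (i + 1) τ / (m τ * A τ ^ i))) :
    ∀ i ∈ Finset.Icc 1 Δ, ∀ t ∈ Set.Icc (0 : ℝ) T,
      z i t = A t ^ i * ∑ ℓ ∈ Finset.Icc i Δ, ζ ℓ * (ℓ.choose i : ℝ) * B t ^ (ℓ - i) := by
  have hTle : (0:ℝ) ≤ T := hT.le
  have huIcc : Set.uIcc (0:ℝ) T = Set.Icc 0 T := Set.uIcc_of_le hTle
  have hApos : ∀ t, 0 < A t := fun t => (hA t) ▸ Real.exp_pos _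
  have hmne : ∀ t ∈ Set.Icc (0:ℝ) T, m t ≠ 0 := fun t ht => (hmpos t ht).ne'
  -- continuity of A on [0,T]
  have hgcont : ContinuousOn (fun τ => (1 + s τ) / m τ) (Set.Icc 0 T) :=
    (continuousOn_const.add hs).div hm hmne
  have hAcont : ContinuousOn A (Set.Icc 0 T) := by
    have h1 : ContinuousOn (fun t => ∫ τ in (0:ℝ)..t, (1 + s τ) / m τ) (Set.Icc 0 T) := by
      have hIO : MeasureTheory.IntegrableOn (fun τ => (1 + s τ) / m τ) (Set.uIcc 0 T) := by
        rw [huIcc]; exact hgcont.integrableOn_compact isCompact_Icc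
      have := intervalIntegral.continuousOn_primitive_interval (a := (0:ℝ)) (b := T)
        (μ := MeasureTheory.volume) hIO
      rwa [huIcc] at this
    have : ContinuousOn (fun t => Real.exp (-∫ τ in (0:ℝ)..t, (1 + s τ) / m τ)) (Set.Icc 0 T) :=
      Real.continuous_exp.comp_continuousOn h1.neg
    exact this.congr (fun t _ => hA t)
  -- f := s·A/m, continuity
  set f : ℝ → ℝ := fun τ => s τ * A τ / m τ with hf
  have hfcont : ContinuousOn f (Set.Icc 0 T) := (hs.mul hAcont).div hm hmne
  have hIccInt : ∀ (h : ℝ → ℝ), ContinuousOn h (Set.Icc 0 T) → ∀ t ∈ Set.Icc (0:ℝ) T,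
      IntervalIntegrable h MeasureTheory.volume 0 t := by
    intro h hc t ht
    apply ContinuousOn.intervalIntegrable
    rw [Set.uIcc_of_le ht.1]
    exact hc.mono (Set.Icc_subset_Icc_right ht.2)
  have hfint : ∀ t ∈ Set.Icc (0:ℝ) T, IntervalIntegrable f MeasureTheory.volume 0 t :=
    hIccInt f hfcont
  -- continuity of B
  have hBcont : ContinuousOn B (Set.Icc 0 T) := by
    have h1 : ContinuousOn (fun t => ∫ τ in (0:ℝ)..t, f τ) (Set.Icc 0 T) := by
      have hIO : MeasureTheory.IntegrableOn f (Set.uIcc 0 T) := by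
        rw [huIcc]; exact hfcont.integrableOn_compact isCompact_Icc
      have := intervalIntegral.continuousOn_primitive_interval (a := (0:ℝ)) (b := T)
        (μ := MeasureTheory.volume) hIO
      rwa [huIcc] at this
    exact h1.congr (fun t _ => hB t)
  have hB0 : B 0 = 0 := by simp [hB]
  -- derivative of B at interior points
  have hBderiv : ∀ x ∈ Set.Ioo (0:ℝ) T, HasDerivAt B (f x) x := by
    intro x hx
    have hxI : x ∈ Set.Icc (0:ℝ) T := Set.Ioo_subset_Icc_self hx
    have hcf : ContinuousOn f (Set.Ioo 0 T) := hfcont.mono Set.Ioo_subset_Icc_self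
    have hca : ContinuousAt f x :=
      (hfcont x hxI).continuousAt (Icc_mem_nhds hx.1 hx.2)
    have := intervalIntegral.integral_hasDerivAt_right (hfint x hxI)
      (hcf.stronglyMeasurableAtFilter isOpen_Ioo x hx) hca
    exact this.congr_of_eventuallyEq (Filter.Eventually.of_forall fun u => (hB u))
  -- key integral identity
  have key : ∀ (k : ℕ), ∀ t ∈ Set.Icc (0:ℝ) T,
      (∫ τ in (0:ℝ)..t, B τ ^ k * f τ) = B t ^ (k+1) / (k+1) := by
    intro k t ht
    have hcont : ContinuousOn (fun u => B u ^ (k+1) / (k+1)) (Set.Icc 0 t) :=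
      ((hBcont.mono (Set.Icc_subset_Icc_right ht.2)).pow _).div_const _
    have hderiv : ∀ x ∈ Set.Ioo (0:ℝ) t,
        HasDerivWithinAt (fun u => B u ^ (k+1) / (k+1)) (B x ^ k * f x) (Set.Ioi x) x := by
      intro x hx
      have hx' : x ∈ Set.Ioo (0:ℝ) T := ⟨hx.1, lt_of_lt_of_le hx.2 ht.2⟩
      have h1 : HasDerivAt (fun u => B u ^ (k+1) / (k+1))
          ((k+1 : ℕ) * B x ^ k * f x / (k+1)) x :=
        (((hBderiv x hx').pow (k+1))).div_const _
      have : ((k+1 : ℕ) : ℝ) * B x ^ k * f x / (k+1) = B x ^ k * f x := by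
        field_simp
        push_cast
        ring
      rw [this] at h1
      exact h1.hasDerivWithinAt
    have hint : IntervalIntegrable (fun τ => B τ ^ k * f τ) MeasureTheory.volume 0 t :=
      hIccInt _ ((hBcont.pow _).mul hfcont) t ht
    have := intervalIntegral.integral_eq_sub_of_hasDeriv_right_of_le ht.1 hcont hderiv hint
    rw [this, hB0]
    simp
  -- main downward induction
  have main : ∀ (j i : ℕ), i + j = Δ → 1 ≤ i → ∀ t ∈ Set.Icc (0:ℝ) T,
      z i t = A t ^ i * ∑ ℓ ∈ Finset.Icc i Δ, ζ ℓ * (ℓ.choose i : ℝ) * B t ^ (ℓ - i) := by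
    intro j
    induction j with
    | zero =>
      intro i hi _ t ht
      subst hi
      simp only [Nat.add_zero] at *
      rw [hzΔ t ht, Finset.Icc_self, Finset.sum_singleton]
      simp [Nat.choose_self]
      ring
    | succ j ih =>
      intro i hi h1 t ht
      have hiΔ : i < Δ := by omega
      have hIH : ∀ τ ∈ Set.Icc (0:ℝ) T, z (i+1) τ =
          A τ ^ (i+1) * ∑ ℓ ∈ Finset.Icc (i+1) Δ, ζ ℓ * (ℓ.choose (i+1) : ℝ) * B τ ^ (ℓ - (i+1)) :=
        ih (i+1) (by omega) (by omega)
      rw [hrec i h1 hiΔ t ht]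
      -- rewrite the integral
      have hintg : (∫ τ in (0:ℝ)..t, ((i : ℝ) + 1) * s τ * z (i + 1) τ / (m τ * A τ ^ i))
          = ∑ ℓ ∈ Finset.Icc (i+1) Δ, ζ ℓ * (ℓ.choose i : ℝ) * B t ^ (ℓ - i) := by
        have hEq : ∀ τ ∈ Set.uIcc (0:ℝ) t,
            ((i : ℝ) + 1) * s τ * z (i + 1) τ / (m τ * A τ ^ i)
            = ∑ ℓ ∈ Finset.Icc (i+1) Δ,
                ζ ℓ * (((i:ℝ)+1) * (ℓ.choose (i+1) : ℝ)) * (B τ ^ (ℓ - (i+1)) * f τ) := by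
          intro τ hτ
          have hτI : τ ∈ Set.Icc (0:ℝ) T := by
            rw [Set.uIcc_of_le ht.1] at hτ
            exact ⟨hτ.1, le_trans hτ.2 ht.2⟩
          rw [hIH τ hτI, Finset.mul_sum, Finset.mul_sum, Finset.sum_div]
          refine Finset.sum_congr rfl fun ℓ hℓ => ?_
          have hAne : A τ ≠ 0 := (hApos τ).ne'
          have hmne' : m τ ≠ 0 := hmne τ hτI
          simp only [hf]
          field_simp
          ring
        rw [intervalIntegral.integral_congr hEq]
        rw [intervalIntegral.integral_finset_sum]
        · refine Finset.sum_congr rfl fun ℓ hℓ => ?_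
          simp only [Finset.mem_Icc] at hℓ
          rw [intervalIntegral.integral_const_mul, key (ℓ - (i+1)) t ht]
          have hsub : ℓ - (i+1) + 1 = ℓ - i := by omega
          rw [hsub]
          have hchoose : ((i:ℝ)+1) * (ℓ.choose (i+1) : ℝ) / (((ℓ - (i+1) : ℕ) : ℝ) + 1)
              = (ℓ.choose i : ℝ) := by
            have h := Nat.choose_succ_right_eq ℓ i
            have h2 : (ℓ.choose (i+1) : ℝ) * ((i:ℝ)+1) = (ℓ.choose i : ℝ) * ((ℓ - i : ℕ) : ℝ) := by
              exact_mod_cast h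
            have hne : (((ℓ - (i+1) : ℕ) : ℝ) + 1) ≠ 0 := by positivity
            rw [div_eq_iff hne]
            have h3 : (((ℓ - (i+1) : ℕ) : ℝ) + 1) = ((ℓ - i : ℕ) : ℝ) := by
              rw [← hsub]; push_cast; ring
            rw [h3]
            linarith [h2]
          rw [← hchoose]
          ring
        · intro ℓ hℓ
          exact (hIccInt _ ((hBcont.pow _).mul hfcont) t ht).const_mul _
      rw [hintg]
      have hsplit : Finset.Icc i Δ = insert i (Finset.Icc (i+1) Δ) := by
        ext x; simp only [Finset.mem_Icc, Finset.mem_insert]; omega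
      rw [hsplit, Finset.sum_insert (by simp)]
      simp only [Nat.choose_self, Nat.cast_one, Nat.sub_self, pow_zero, mul_one]
  intro i hi t ht
  simp only [Finset.mem_Icc] at hi
  exact main (Δ - i) i (by omega) hi.1 t ht
end
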